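/- Let A ⊆ ℝⁿ be nonempty and closed, and let r : bdry A → (0, +∞) be continuous. If A satisfies the extended exterior r(·)-sphere condition and ρ(x) := min{ r(a)/2 : a ∈ proj_A(x) } for x ∈ Aᶜ, then for every x ∈ Aᶜ there exists y_x ∈ Aᶜ with x ∈ B̄(y_x; ρ(x)) ⊆ Aᶜ; i.e., Aᶜ is the union of closed balls with radius function ρ(·). -/

import Mathlib

set_option maxHeartbeats 1000000


open Metric Set

/-- The set of closest points of `A` to `x`. -/
def projSet {n : ℕ} (A : Set (EuclideanSpace ℝ (Fin n)))
    (x : EuclideanSpace ℝ (Fin n)) : Set (EuclideanSpace ℝ (Fin n)) :=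
  {a ∈ A | dist x a = Metric.infDist x A}

/-- The proximal normal cone to `A` at `a`. -/
def proxNormalCone {n : ℕ} (A : Set (EuclideanSpace ℝ (Fin n)))
    (a : EuclideanSpace ℝ (Fin n)) : Set (EuclideanSpace ℝ (Fin n)) :=
  {ζ | ∃ σ : ℝ, 0 ≤ σ ∧ ∀ y ∈ A, (inner ℝ ζ (y - a) : ℝ) ≤ σ * ‖y - a‖ ^ 2}

/-- `A` satisfies the extended exterior `r(·)`-sphere condition (finite radii). -/
def ExtExtSphere {n : ℕ} (A : Set (EuclideanSpace ℝ (Fin n)))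
    (r : EuclideanSpace ℝ (Fin n) → ℝ) : Prop :=
  ∀ a ∈ frontier A,
    (a ∈ frontier (interior A) →
      ∃ ζ, ‖ζ‖ = 1 ∧ ζ ∈ proxNormalCone A a ∧
        Metric.ball (a + r a • ζ) (r a) ∩ A = ∅) ∧
    (a ∉ frontier (interior A) →
      ∀ ζ, ‖ζ‖ = 1 → ζ ∈ proxNormalCone A a →
        Metric.ball (a + r a • ζ) (r a) ∩ A = ∅)


lemma choose_params (d ρ R u : ℝ) (hd : 0 < d) (hdρ : d ≤ ρ) (hR : 2 * ρ ≤ R)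
    (hu : 0 ≤ u) (hu1 : u ≤ 1) :
    ∃ s : ℝ, 0 ≤ s ∧ ∀ M : ℝ, 0 ≤ M → M ^ 2 = 1 + 2 * s * u + s ^ 2 →
      ∃ t : ℝ, ρ < t ∧ t * (R + s * d) ≤ M * d * R ∧
        t ^ 2 + d ^ 2 - 2 * t * d * ((1 + s * u) / M) ≤ ρ ^ 2 := by
  have hρ : 0 < ρ := lt_of_lt_of_le hd hdρ
  have hRpos : 0 < R := by linarith
  set k : ℝ := ρ / d with hk_def
  have hk : 1 ≤ k := (one_le_div hd).2 hdρ
  set δ : ℝ := d / (8 * ρ) with hδ_def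
  have hδpos : 0 < δ := by positivity
  have hδ8 : δ ≤ 1 / 8 := by
    rw [hδ_def, div_le_div_iff₀ (by positivity) (by norm_num)]
    linarith
  have hkδ : 4 * k * δ = 1 / 2 := by
    field_simp [hk_def, hδ_def]
    rw [hk_def, hδ_def]; field_simp; norm_num
  set N : ℝ := 2 * k - δ with hN_def
  have hN1 : 1 ≤ N := by
    have : (15:ℝ)/8 ≤ N := by rw [hN_def]; linarith
    linarith
  have hNk : N < 2 * k := by rw [hN_def]; linarith
  refine ⟨Real.sqrt (N ^ 2 - 1), Real.sqrt_nonneg _, ?_⟩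
  set s : ℝ := Real.sqrt (N ^ 2 - 1) with hs_def
  have hs0 : 0 ≤ s := Real.sqrt_nonneg _
  have hs2 : s ^ 2 = N ^ 2 - 1 := Real.sq_sqrt (by nlinarith)
  have hsN : k + s / 2 < N := by
    have hNk' : 0 < 2 * (N - k) := by rw [hN_def]; nlinarith
    have h1 : s < 2 * (N - k) := by
      nlinarith [hs2, hkδ, sq_nonneg (s - 2 * (N - k))]
    linarith
  intro M hM0 hM2
  have hsu0 : 0 ≤ s * u := mul_nonneg hs0 hu
  have hMpos : 0 < M := by nlinarith
  have hMN : N ≤ M := by nlinarith [sq_nonneg (M - N), sq_nonneg (M + N)]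
  have hu2 : u ^ 2 ≤ 1 := by nlinarith
  have hs2u : s ^ 2 * u ^ 2 ≤ s ^ 2 :=
    mul_le_of_le_one_right (sq_nonneg s) hu2
  set c : ℝ := (1 + s * u) / M with hc_def
  have hcpos : 0 < c := by positivity
  have hc1 : c ≤ 1 := by
    rw [hc_def, div_le_one hMpos]
    nlinarith [sq_nonneg (M - (1 + s * u)), sq_nonneg (M + (1 + s * u))]
  have hcN : 1 / N ≤ c := by
    rw [hc_def, div_le_div_iff₀ (by linarith) hMpos]
    have hMsq : M ^ 2 ≤ (N * (1 + s * u)) ^ 2 := by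
      have expand : (N * (1 + s * u)) ^ 2 = (1 + s ^ 2) * (1 + 2 * s * u + s ^ 2 * u ^ 2) := by
        rw [mul_pow]; rw [show N ^ 2 = 1 + s ^ 2 by linarith]; ring
      rw [expand, hM2]
      nlinarith [mul_nonneg (mul_nonneg (sq_nonneg s) hs0) hu,
        mul_nonneg (sq_nonneg (s * u)) (sq_nonneg s)]
    have hNsu : 0 < N * (1 + s * u) := by positivity
    nlinarith [sq_nonneg (M + N * (1 + s * u))]
  have hcd : d / (2 * ρ) < c := by
    have h2k : d / (2 * ρ) = 1 / (2 * k) := by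
      rw [hk_def]; field_simp
    have : 1 / (2 * k) < 1 / N := one_div_lt_one_div_of_lt (by linarith) hNk
    rw [h2k]; linarith
  set t' : ℝ := M * d * R / (R + s * d) with ht'_def
  have hden : 0 < R + s * d := by nlinarith
  have ht'ρ : ρ < t' := by
    rw [ht'_def, lt_div_iff₀ hden]
    have h2 : (k + s / 2) * (d * R) = ρ * R + s * d * R / 2 := by
      rw [hk_def]; field_simp
    have hMk : 0 < M - (k + s / 2) := by linarith
    have e5 : 0 < (M - (k + s / 2)) * (d * R) := mul_pos hMk (mul_pos hd hRpos)
    have e6 : 0 ≤ s * d * (R - 2 * ρ) :=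
      mul_nonneg (mul_nonneg hs0 hd.le) (by linarith)
    nlinarith [e5, e6, h2]
  set g : ℝ := 2 * ρ * d * c - d ^ 2 with hg_def
  have hg : 0 < g := by
    have := hcd
    rw [div_lt_iff₀ (by positivity)] at this
    rw [hg_def]; nlinarith
  set ε : ℝ := g / (4 * ρ) with hε_def
  have hεpos : 0 < ε := by rw [hε_def]; positivity
  refine ⟨min t' (ρ + ε), lt_min ht'ρ (by linarith), ?_, ?_⟩
  · calc min t' (ρ + ε) * (R + s * d) ≤ t' * (R + s * d) :=
          mul_le_mul_of_nonneg_right (min_le_left _ _) hden.le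
      _ = M * d * R := by rw [ht'_def]; field_simp
  · have ht''ρ : ρ < min t' (ρ + ε) := lt_min ht'ρ (by linarith)
    have ht''ub : min t' (ρ + ε) ≤ ρ + ε := min_le_right _ _
    have hc2ρd : 2 * ρ * d * c ≤ 2 * ρ * d := by
      nlinarith [mul_pos hρ hd]
    have h7 : 2 * ρ * d ≤ 2 * ρ * ρ :=
      mul_le_mul_of_nonneg_left hdρ (by linarith)
    have hεub : ε ≤ ρ / 2 := by
      rw [hε_def, div_le_div_iff₀ (by positivity) (by norm_num)]
      rw [hg_def]
      linarith only [hc2ρd, h7, sq_nonneg d]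
    have hdc : d * c ≤ ρ := by
      have : d * c ≤ d * 1 := mul_le_mul_of_nonneg_left hc1 hd.le
      linarith
    have h1 : 2 * ρ * ε = g / 2 := by rw [hε_def]; field_simp; ring
    have hε2 : ε ^ 2 ≤ g / 8 := by
      have e1 : ε * ε ≤ ε * (ρ / 2) := mul_le_mul_of_nonneg_left hεub hεpos.le
      have e2 : ε * (ρ / 2) = g / 8 := by rw [hε_def]; field_simp; ring
      rw [sq]
      linarith only [e1, e2]
    have key : (ρ + ε) ^ 2 + d ^ 2 - 2 * (ρ + ε) * d * c ≤ ρ ^ 2 := by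
      have e3 : 0 ≤ 2 * ε * (d * c) :=
        mul_nonneg (by linarith) (mul_nonneg hd.le hcpos.le)
      have expand : (ρ + ε) ^ 2 + d ^ 2 - 2 * (ρ + ε) * d * c
          = ρ ^ 2 + 2 * ρ * ε + ε ^ 2 + d ^ 2 - 2 * ρ * (d * c) - 2 * ε * (d * c) := by ring
      rw [expand]
      have : ρ ^ 2 + 2 * ρ * ε + ε ^ 2 + d ^ 2 - 2 * ρ * (d * c) - 2 * ε * (d * c)
          ≤ ρ ^ 2 + g / 2 + g / 8 + d ^ 2 - 2 * ρ * (d * c) := by linarith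
      have e4 : d ^ 2 - 2 * ρ * (d * c) = -g := by rw [hg_def]; ring
      linarith
    set T : ℝ := min t' (ρ + ε) with hT_def
    have hfin := mul_nonpos_of_nonpos_of_nonneg
      (sub_nonpos.2 ht''ub)
      (show 0 ≤ T + (ρ + ε) - 2 * (d * c) by linarith)
    have hexp : (T - (ρ + ε)) * (T + (ρ + ε) - 2 * (d * c))
        = (T ^ 2 - 2 * T * d * c) - ((ρ + ε) ^ 2 - 2 * (ρ + ε) * d * c) := by ring
    rw [hexp] at hfin
    linarith [key]

lemma inner_le_of_dist_ge {V : Type*} [NormedAddCommGroup V] [InnerProductSpace ℝ V]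
    {q ξ w : V} {t : ℝ} (ht : 0 < t) (hξ : ‖ξ‖ = 1) (h : t ≤ dist w (q + t • ξ)) :
    2 * t * (inner ℝ ξ (w - q) : ℝ) ≤ ‖w - q‖ ^ 2 := by
  have e : dist w (q + t • ξ) = ‖(w - q) - t • ξ‖ := by
    rw [dist_eq_norm, sub_add_eq_sub_sub]
  rw [e] at h
  have h2 : t ^ 2 ≤ ‖(w - q) - t • ξ‖ ^ 2 := by
    have := norm_nonneg ((w - q) - t • ξ)
    nlinarith
  rw [norm_sub_sq_real, real_inner_smul_right, norm_smul] at h2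
  simp only [hξ, Real.norm_eq_abs, mul_one] at h2
  have habs : |t| = t := abs_of_pos ht
  rw [habs] at h2
  have hcomm : (inner ℝ (w - q) ξ : ℝ) = inner ℝ ξ (w - q) := real_inner_comm _ _
  nlinarith [h2]

lemma main_ball {V : Type*} [NormedAddCommGroup V] [InnerProductSpace ℝ V]
    (A : Set V) (x b ζ ξ : V) (d ρ R : ℝ)
    (hd : 0 < d) (hdρ : d ≤ ρ) (hR : 2 * ρ ≤ R)
    (hx : x = b + d • ζ) (hζ1 : ‖ζ‖ = 1) (hξ1 : ‖ξ‖ = 1)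
    (hu : 0 ≤ (inner ℝ ζ ξ : ℝ))
    (hAx : ∀ w ∈ A, d ≤ dist w x)
    (hAE : ∀ w ∈ A, R ≤ dist w (b + R • ξ)) :
    ∃ z t, dist x z ≤ ρ ∧ ρ < t ∧ ∀ w ∈ A, t ≤ dist w z := by
  have hρ : 0 < ρ := lt_of_lt_of_le hd hdρ
  have hRpos : 0 < R := by linarith
  have hu1 : (inner ℝ ζ ξ : ℝ) ≤ 1 := by
    have := real_inner_le_norm ζ ξ
    rw [hζ1, hξ1] at this; simpa using this
  obtain ⟨s, hs0, hmain⟩ := choose_params d ρ R (inner ℝ ζ ξ : ℝ) hd hdρ hR hu hu1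
  have hM2 : ‖ζ + s • ξ‖ ^ 2 = 1 + 2 * s * (inner ℝ ζ ξ : ℝ) + s ^ 2 := by
    rw [norm_add_sq_real, real_inner_smul_right, norm_smul, hζ1, hξ1]
    rw [Real.norm_eq_abs, abs_of_nonneg hs0]
    ring
  obtain ⟨t, htρ, htT, htQ⟩ := hmain ‖ζ + s • ξ‖ (norm_nonneg _) hM2
  set m : V := ζ + s • ξ with hm_def
  set M : ℝ := ‖m‖ with hM_def
  have hMpos : 0 < M := by
    have : (1:ℝ) ≤ M ^ 2 := by
      rw [hM2]; nlinarith [mul_nonneg hs0 hu, sq_nonneg s]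
    nlinarith [norm_nonneg m]
  have him : (inner ℝ ζ m : ℝ) = 1 + s * (inner ℝ ζ ξ : ℝ) := by
    rw [hm_def, inner_add_right, real_inner_smul_right, real_inner_self_eq_norm_sq, hζ1]
    norm_num
  have htpos : 0 < t := lt_trans hρ htρ
  refine ⟨b + (t / M) • m, t, ?_, htρ, ?_⟩
  · -- dist x z ≤ ρ
    have hxz : x - (b + (t / M) • m) = d • ζ - (t / M) • m := by
      rw [hx]; abel
    have hnorm : ‖d • ζ - (t / M) • m‖ ^ 2
        = t ^ 2 + d ^ 2 - 2 * t * d * ((1 + s * (inner ℝ ζ ξ : ℝ)) / M) := by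
      rw [norm_sub_sq_real, real_inner_smul_left, real_inner_smul_right, him,
        norm_smul, norm_smul, Real.norm_eq_abs, Real.norm_eq_abs,
        abs_of_pos hd, abs_of_nonneg (div_nonneg htpos.le hMpos.le), hζ1]
    -- |t/M| * M : ‖m‖ = M
      field_simp
      ring
    rw [dist_eq_norm, hxz]
    have h2 : ‖d • ζ - (t / M) • m‖ ^ 2 ≤ ρ ^ 2 := by rw [hnorm]; exact htQ
    nlinarith [norm_nonneg (d • ζ - (t / M) • m), hρ]
  · intro w hw
    have i1 : 2 * d * (inner ℝ ζ (w - b) : ℝ) ≤ ‖w - b‖ ^ 2 := by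
      apply inner_le_of_dist_ge hd hζ1
      rw [← hx]; exact hAx w hw
    have i2 : 2 * R * (inner ℝ ξ (w - b) : ℝ) ≤ ‖w - b‖ ^ 2 := by
      exact inner_le_of_dist_ge hRpos hξ1 (hAE w hw)
    have hcomb : 2 * d * R * (inner ℝ m (w - b) : ℝ) ≤ (R + s * d) * ‖w - b‖ ^ 2 := by
      rw [hm_def, inner_add_left, real_inner_smul_left]
      have j1 : R * (2 * d * (inner ℝ ζ (w - b) : ℝ)) ≤ R * ‖w - b‖ ^ 2 :=
        mul_le_mul_of_nonneg_left i1 hRpos.le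
      have j2 : (s * d) * (2 * R * (inner ℝ ξ (w - b) : ℝ)) ≤ (s * d) * ‖w - b‖ ^ 2 :=
        mul_le_mul_of_nonneg_left i2 (mul_nonneg hs0 hd.le)
      ring_nf at j1 j2 ⊢
      linarith only [j1, j2]
    have hexp : dist w (b + (t / M) • m) ^ 2
        = ‖w - b‖ ^ 2 - 2 * (t / M) * (inner ℝ m (w - b) : ℝ) + (t / M) ^ 2 * M ^ 2 := by
      rw [dist_eq_norm, sub_add_eq_sub_sub, norm_sub_sq_real, real_inner_smul_right,
        norm_smul, Real.norm_eq_abs, abs_of_nonneg (div_nonneg htpos.le hMpos.le)]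
      have hcomm : (inner ℝ (w - b) m : ℝ) = inner ℝ m (w - b) := real_inner_comm _ _
      rw [hcomm]
      ring
    have hsq : t ^ 2 ≤ dist w (b + (t / M) • m) ^ 2 := by
      rw [hexp]
      have e0 : (t / M) ^ 2 * M ^ 2 = t ^ 2 := by field_simp
      rw [e0]
      have hbound : 2 * (t / M) * (inner ℝ m (w - b) : ℝ) ≤ ‖w - b‖ ^ 2 := by
        rw [show (2:ℝ) * (t / M) * (inner ℝ m (w - b) : ℝ)
            = 2 * t * (inner ℝ m (w - b) : ℝ) / M by ring, div_le_iff₀ hMpos]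
        -- 2 * t * ⟪m, w-b⟫ ≤ ‖w-b‖^2 * M
        have j3 : t * (2 * d * R * (inner ℝ m (w - b) : ℝ)) ≤ t * ((R + s * d) * ‖w - b‖ ^ 2) :=
          mul_le_mul_of_nonneg_left hcomb htpos.le
        have j4 : (t * (R + s * d)) * ‖w - b‖ ^ 2 ≤ (M * d * R) * ‖w - b‖ ^ 2 :=
          mul_le_mul_of_nonneg_right htT (sq_nonneg _)
        have hdR : 0 < d * R := mul_pos hd hRpos
        nlinarith [j3, j4]
      linarith
    have := dist_nonneg (x := w) (y := b + (t / M) • m)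
    nlinarith [hsq]


theorem stmt_19 {n : ℕ} (A : Set (EuclideanSpace ℝ (Fin n))) (hA : A.Nonempty)
    (hAc : IsClosed A) (r : EuclideanSpace ℝ (Fin n) → ℝ)
    (hrpos : ∀ a ∈ frontier A, 0 < r a) (hrcont : ContinuousOn r (frontier A))
    (hext : ExtExtSphere A r) (ρ : EuclideanSpace ℝ (Fin n) → ℝ)
    (hρ : ∀ x, ρ x = sInf ((fun a => r a / 2) '' projSet A x)) :
    ∀ x ∉ A, ∃ y ∉ A, x ∈ Metric.closedBall y (ρ x) ∧
      Metric.closedBall y (ρ x) ⊆ Aᶜ := by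
  intro x hx
  set d : ℝ := infDist x A with hd_def
  have hdpos : 0 < d := (hAc.notMem_iff_infDist_pos hA).1 hx
  obtain ⟨b, hbA, hbd⟩ := hAc.exists_infDist_eq_dist hA x
  have hAx : ∀ w ∈ A, d ≤ dist w x := fun w hw => by
    rw [dist_comm]; exact infDist_le_dist_of_mem hw
  have hbproj : b ∈ projSet A x := ⟨hbA, hbd.symm⟩
  -- every projection point is on the frontier
  have hprojfr : ∀ a ∈ projSet A x, a ∈ frontier A := by
    rintro a ⟨haA, had⟩
    rw [hAc.frontier_eq]
    refine ⟨haA, fun hint => ?_⟩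
    obtain ⟨ε, hε, hball⟩ := Metric.isOpen_iff.1 isOpen_interior a hint
    set t : ℝ := min (ε / 2) d with ht_def
    have htpos : 0 < t := lt_min (by linarith) hdpos
    have htε : t < ε := lt_of_le_of_lt (min_le_left _ _) (by linarith)
    have htd : t ≤ d := min_le_right _ _
    set w : EuclideanSpace ℝ (Fin n) := a + (t / d) • (x - a) with hw_def
    have hda : dist a x = d := by rw [dist_comm, had]
    have hwa : dist w a = t := by
      rw [dist_eq_norm]
      have e : w - a = (t / d) • (x - a) := by rw [hw_def]; abel
      rw [e, norm_smul, Real.norm_eq_abs, abs_of_pos (div_pos htpos hdpos)]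
      have : ‖x - a‖ = d := by rw [← dist_eq_norm, ← hda, dist_comm]
      rw [this]; field_simp
    have hwx : dist w x = d - t := by
      rw [dist_eq_norm]
      have e : w - x = (1 - t / d) • (a - x) := by
        rw [hw_def]
        rw [smul_sub, sub_smul, one_smul, smul_sub]
        abel
      rw [e, norm_smul, Real.norm_eq_abs]
      have h1 : (0:ℝ) ≤ 1 - t / d := by
        rw [sub_nonneg, div_le_one hdpos]; exact htd
      rw [abs_of_nonneg h1]
      have : ‖a - x‖ = d := by rw [← dist_eq_norm, hda]
      rw [this]; field_simp
    have hwA : w ∈ A := interior_subset (hball (by rw [mem_ball, hwa]; exact htε))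
    have := hAx w hwA
    rw [hwx] at this
    linarith
  have hbfr : b ∈ frontier A := hprojfr b hbproj
  have hSne : ((fun a => r a / 2) '' projSet A x).Nonempty := ⟨_, ⟨b, hbproj, rfl⟩⟩
  have hSbdd : BddBelow ((fun a => r a / 2) '' projSet A x) := by
    refine ⟨0, ?_⟩
    rintro v ⟨a, ha, rfl⟩
    exact (half_pos (hrpos a (hprojfr a ha))).le
  have hρ0 : 0 ≤ ρ x := by
    rw [hρ]
    apply le_csInf hSne
    rintro v ⟨a, ha, rfl⟩
    exact (half_pos (hrpos a (hprojfr a ha))).le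
  have hρle : ρ x ≤ r b / 2 := by
    rw [hρ]; exact csInf_le hSbdd ⟨b, hbproj, rfl⟩
  by_cases hcase : ρ x < d
  · -- easy case : the ball around x itself works
    refine ⟨x, hx, mem_closedBall_self hρ0, fun w hw => ?_⟩
    intro hwA
    have h1 := hAx w hwA
    have h2 : dist w x ≤ ρ x := by rwa [mem_closedBall] at hw
    linarith
  · push_neg at hcase
    -- main case : d ≤ ρ x
    set ζ : EuclideanSpace ℝ (Fin n) := d⁻¹ • (x - b) with hζ_def
    have hxb : x = b + d • ζ := by
      rw [hζ_def, smul_smul, mul_inv_cancel₀ (ne_of_gt hdpos), one_smul]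
      abel
    have hnxb : ‖x - b‖ = d := by rw [← dist_eq_norm]; exact hbd.symm
    have hζ1 : ‖ζ‖ = 1 := by
      rw [hζ_def, norm_smul, Real.norm_eq_abs, abs_of_pos (by positivity : (0:ℝ) < d⁻¹),
        hnxb]
      field_simp
    set R : ℝ := r b with hR_def
    have hRpos : 0 < R := hrpos b hbfr
    have hR2ρ : 2 * ρ x ≤ R := by linarith
    -- obtain the exterior ball direction ξ with nonnegative inner ℝ product with ζ
    have key : ∃ ξ : EuclideanSpace ℝ (Fin n), ‖ξ‖ = 1 ∧ 0 ≤ (inner ℝ ζ ξ : ℝ) ∧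
        ∀ w ∈ A, R ≤ dist w (b + R • ξ) := by
      by_cases hbint : b ∈ frontier (interior A)
      · -- hard case : b is on the boundary of the interior
        -- Step 1 : approximation statement
        have hQ : ∀ ε : ℝ, 0 < ε → ∃ p q ξ, p ∈ A ∧ q ∈ frontier A ∧
            dist p b ≤ ε ∧ dist q b ≤ 2 * ε ∧ ‖ξ‖ = 1 ∧
            (∀ w ∈ A, r q ≤ dist w (q + r q • ξ)) ∧
            (-(ε * ‖x - p‖) ≤ 2 * r q * (inner ℝ ξ (x - p) : ℝ)) := by
          intro ε hε
          have hbcl : b ∈ closure (interior A) := frontier_subset_closure hbint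
          obtain ⟨p, hpInt, hpb⟩ := Metric.mem_closure_iff.1 hbcl ε hε
          have hpA : p ∈ A := interior_subset hpInt
          have hpx : d ≤ dist p x := hAx p hpA
          set g : ℝ → EuclideanSpace ℝ (Fin n) := fun τ => p + τ • (x - p) with hg_def
          have hgcont : Continuous g := by
            apply continuous_const.add
            exact continuous_id.smul continuous_const
          set S : Set ℝ := Icc (0:ℝ) 1 ∩ g ⁻¹' (closure (interior A)) with hS_def
          have hS0 : (0:ℝ) ∈ S := by
            constructor
            · exact ⟨le_refl 0, zero_le_one⟩
            · show g 0 ∈ closure (interior A)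
              have : g 0 = p := by simp [hg_def]
              rw [this]; exact subset_closure hpInt
          have hScomp : IsCompact S :=
            isCompact_Icc.inter_right (isClosed_closure.preimage hgcont)
          set τ : ℝ := sSup S with hτ_def
          have hτS : τ ∈ S := hScomp.sSup_mem ⟨0, hS0⟩
          set q : EuclideanSpace ℝ (Fin n) := g τ with hq_def
          have hqcl : q ∈ closure (interior A) := hτS.2
          have hτ01 : τ ∈ Icc (0:ℝ) 1 := hτS.1
          have hqA : q ∈ A := by
            have h2 : closure (interior A) ⊆ closure A :=
              closure_mono interior_subset
            rw [hAc.closure_eq] at h2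
            exact h2 hqcl
          have hqx : d ≤ dist q x := hAx q hqA
          have hg1 : g 1 = x := by simp [hg_def]
          have hτ1 : τ < 1 := by
            rcases lt_or_eq_of_le hτ01.2 with h | h
            · exact h
            · exfalso; apply hx; rw [← hg1, ← h]; exact hqA
          have hτbdd : BddAbove S := ⟨1, fun σ hσ => hσ.1.2⟩
          have hqint : q ∉ interior A := by
            intro hqi
            have hnb : g ⁻¹' (interior A) ∈ nhds τ :=
              (isOpen_interior.preimage hgcont).mem_nhds hqi
            obtain ⟨η, hη, hball⟩ := Metric.mem_nhds_iff.1 hnb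
            set τ2 : ℝ := min (τ + η / 2) 1 with hτ2_def
            have hτ2gt : τ < τ2 := lt_min (by linarith) hτ1
            have hτ2S : τ2 ∈ S := by
              constructor
              · exact ⟨le_trans hτ01.1 hτ2gt.le, min_le_right _ _⟩
              · have hmemball : τ2 ∈ Metric.ball τ η := by
                  rw [mem_ball, Real.dist_eq, abs_of_nonneg (sub_nonneg.2 hτ2gt.le)]
                  have : τ2 ≤ τ + η / 2 := min_le_left _ _
                  linarith
                exact subset_closure (hball hmemball)
            have := le_csSup hτbdd hτ2S
            rw [← hτ_def] at this
            linarith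
          have hqfrA : q ∈ frontier A := by
            rw [hAc.frontier_eq]; exact ⟨hqA, hqint⟩
          have hqfrI : q ∈ frontier (interior A) := by
            have : q ∈ closure (interior A) \ interior (interior A) :=
              ⟨hqcl, by rwa [interior_interior]⟩
            exact this
          obtain ⟨ξ, hξ1, hξcone, hξball⟩ := (hext q hqfrA).1 hqfrI
          have hrq : 0 < r q := hrpos q hqfrA
          have havoid : ∀ w ∈ A, r q ≤ dist w (q + r q • ξ) := by
            intro w hw
            by_contra h
            push_neg at h
            have : w ∈ Metric.ball (q + r q • ξ) (r q) ∩ A := ⟨mem_ball.2 h, hw⟩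
            rw [hξball] at this
            exact this
          have hτnn : 0 ≤ τ := hτ01.1
          have hqp : q - p = τ • (x - p) := by
            simp only [hq_def, hg_def]
            abel
          have hdistqp : dist q p = τ * ‖x - p‖ := by
            rw [dist_eq_norm, hqp, norm_smul, Real.norm_eq_abs, abs_of_nonneg hτnn]
          have hqxe : q - x = (1 - τ) • (p - x) := by
            simp only [hq_def, hg_def, sub_smul, one_smul, smul_sub]
            abel
          have hdistqx : dist q x = (1 - τ) * ‖p - x‖ := by
            rw [dist_eq_norm, hqxe, norm_smul]
            simp [abs_of_nonneg (show (0:ℝ) ≤ 1 - τ by linarith)]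
          have hpxd : ‖p - x‖ ≤ ε + d := by
            have h1 : dist p x ≤ dist p b + dist b x := dist_triangle _ _ _
            have h2 : dist b x = d := by rw [dist_comm, ← hbd]
            have h3 : dist p b < ε := by rwa [dist_comm] at hpb
            rw [← dist_eq_norm]
            linarith
          have hxp_eq : ‖x - p‖ = ‖p - x‖ := norm_sub_rev _ _
          have hqple : dist q p ≤ ε := by
            have h4 : (1 - τ) * ‖p - x‖ ≥ d := by rw [← hdistqx]; exact hqx
            have h5 : τ * ‖x - p‖ = ‖p - x‖ - (1 - τ) * ‖p - x‖ := by
              rw [hxp_eq]; ring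
            rw [hdistqp, h5]
            linarith
          have hqble : dist q b ≤ 2 * ε := by
            have h6 : dist q b ≤ dist q p + dist p b := dist_triangle _ _ _
            have h3 : dist p b < ε := by rwa [dist_comm] at hpb
            linarith
          have hτpos : 0 < τ := by
            rcases lt_or_eq_of_le hτnn with h | h
            · exact h
            · exfalso; apply hqint
              have : q = p := by rw [hq_def, ← h]; simp [hg_def]
              rw [this]; exact hpInt
          -- the exterior ball at q avoids p
          have hIneq := inner_le_of_dist_ge hrq hξ1 (havoid p hpA)
          -- inner ℝ ξ (p - q) = -τ * inner ℝ ξ (x - p), ‖p - q‖^2 = τ^2 ‖x-p‖^2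
          have hpq : p - q = -(τ • (x - p)) := by rw [← hqp]; abel
          have hinner_pq : (inner ℝ ξ (p - q) : ℝ) = -(τ * (inner ℝ ξ (x - p) : ℝ)) := by
            rw [hpq, inner_neg_right, real_inner_smul_right]
          have hnorm_pq : ‖p - q‖ ^ 2 = τ ^ 2 * ‖x - p‖ ^ 2 := by
            rw [hpq, norm_neg, norm_smul, Real.norm_eq_abs, abs_of_nonneg hτnn, mul_pow]
          rw [hinner_pq, hnorm_pq] at hIneq
          have hpble : dist p b ≤ ε := by
            rw [dist_comm] at hpb; exact hpb.le
          refine ⟨p, q, ξ, hpA, hqfrA, hpble, hqble, hξ1, havoid, ?_⟩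
          -- from -2 r q τ I ≤ τ^2 X^2 and τ X ≤ ε derive -(ε X) ≤ 2 r q I
          by_contra hneg
          push_neg at hneg
          have hX : 0 ≤ ‖x - p‖ := norm_nonneg _
          have hτX : τ * ‖x - p‖ ≤ ε := by rw [← hdistqp]; exact hqple
          nlinarith [mul_lt_mul_of_pos_left hneg hτpos,
            mul_le_mul_of_nonneg_right hτX hX, sq_nonneg τ, sq_nonneg ‖x - p‖]
        -- Step 2 : pass to the limit
        have hεk : Filter.Tendsto (fun k : ℕ => 1 / ((k:ℝ) + 1)) Filter.atTop (nhds 0) :=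
          tendsto_one_div_add_atTop_nhds_zero_nat
        choose p q ξ hp hqfr hpb hqb hξ1 havoid hinner using
          fun k : ℕ => hQ (1 / ((k:ℝ) + 1)) (by positivity)
        have hpconv : Filter.Tendsto p Filter.atTop (nhds b) := by
          rw [tendsto_iff_dist_tendsto_zero]
          exact squeeze_zero (fun _ => dist_nonneg) hpb hεk
        have hqconv : Filter.Tendsto q Filter.atTop (nhds b) := by
          rw [tendsto_iff_dist_tendsto_zero]
          refine squeeze_zero (fun _ => dist_nonneg) hqb ?_
          have := hεk.const_mul (2:ℝ)
          simpa using this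
        have hmem : ∀ k, ξ k ∈ Metric.sphere (0 : EuclideanSpace ℝ (Fin n)) 1 := by
          intro k
          rw [mem_sphere_zero_iff_norm]
          exact hξ1 k
        obtain ⟨Ξ, hΞmem, φ, hφ, hΞconv⟩ :=
          (isCompact_sphere (0 : EuclideanSpace ℝ (Fin n)) 1).tendsto_subseq hmem
        have hΞ1 : ‖Ξ‖ = 1 := mem_sphere_zero_iff_norm.1 hΞmem
        have hφat : Filter.Tendsto φ Filter.atTop Filter.atTop := hφ.tendsto_atTop
        have hpφ : Filter.Tendsto (fun k => p (φ k)) Filter.atTop (nhds b) := hpconv.comp hφat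
        have hqφ : Filter.Tendsto (fun k => q (φ k)) Filter.atTop (nhds b) := hqconv.comp hφat
        have hεφ : Filter.Tendsto (fun k => 1 / ((φ k : ℝ) + 1)) Filter.atTop (nhds 0) :=
          hεk.comp hφat
        have hrconv : Filter.Tendsto (fun k => r (q (φ k))) Filter.atTop (nhds R) := by
          have hrb : Filter.Tendsto r (nhdsWithin b (frontier A)) (nhds (r b)) :=
            hrcont b hbfr
          refine hrb.comp (tendsto_nhdsWithin_iff.2 ⟨hqφ, ?_⟩)
          exact Filter.Eventually.of_forall (fun k => hqfr (φ k))
        have hcenter : Filter.Tendsto (fun k => q (φ k) + r (q (φ k)) • ξ (φ k))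
            Filter.atTop (nhds (b + R • Ξ)) := by
          exact hqφ.add (hrconv.smul hΞconv)
        refine ⟨Ξ, hΞ1, ?_, ?_⟩
        · -- 0 ≤ inner ℝ ζ Ξ
          have hLHS : Filter.Tendsto
              (fun k => -((1 / ((φ k : ℝ) + 1)) * ‖x - p (φ k)‖)) Filter.atTop (nhds 0) := by
            have hnorm : Filter.Tendsto (fun k => ‖x - p (φ k)‖) Filter.atTop (nhds ‖x - b‖) :=
              (tendsto_const_nhds.sub hpφ).norm
            have := (hεφ.mul hnorm).neg
            simpa using this
          have hRHS : Filter.Tendsto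
              (fun k => 2 * r (q (φ k)) * (inner ℝ (ξ (φ k)) (x - p (φ k)) : ℝ))
              Filter.atTop (nhds (2 * R * (inner ℝ Ξ (x - b) : ℝ))) := by
            exact ((hrconv.const_mul 2).mul (hΞconv.inner (tendsto_const_nhds.sub hpφ)))
          have h0 : (0:ℝ) ≤ 2 * R * (inner ℝ Ξ (x - b) : ℝ) :=
            le_of_tendsto_of_tendsto' hLHS hRHS (fun k => hinner (φ k))
          have hxbz : x - b = d • ζ := by rw [hxb]; abel
          rw [hxbz, real_inner_smul_right] at h0
          have hfin : (0:ℝ) ≤ (inner ℝ Ξ ζ : ℝ) := by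
            by_contra hI
            push_neg at hI
            have h1 : 0 < (2 * R * d) * (-(inner ℝ Ξ ζ : ℝ)) :=
              mul_pos (mul_pos (by linarith) hdpos) (neg_pos.2 hI)
            nlinarith [h0, h1]
          rwa [real_inner_comm] at hfin
        · -- exterior ball in the limit
          intro w hw
          refine le_of_tendsto_of_tendsto' hrconv (tendsto_const_nhds.dist hcenter) ?_
          intro k
          exact havoid (φ k) w hw
      · -- easy case : all unit proximal normals have exterior balls
        refine ⟨ζ, hζ1, by rw [real_inner_self_eq_norm_sq, hζ1]; norm_num, ?_⟩
        have hcone : ζ ∈ proxNormalCone A b := by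
          refine ⟨1 / (2 * d), by positivity, fun y hy => ?_⟩
          have h1 : 2 * d * (inner ℝ ζ (y - b) : ℝ) ≤ ‖y - b‖ ^ 2 := by
            apply inner_le_of_dist_ge hdpos hζ1
            rw [← hxb]; exact hAx y hy
          rw [div_mul_eq_mul_div, one_mul, le_div_iff₀ (by positivity)]
          linarith
        have hball := ((hext b hbfr).2 hbint) ζ hζ1 hcone
        intro w hw
        by_contra h
        push_neg at h
        have : w ∈ Metric.ball (b + R • ζ) R ∩ A := ⟨mem_ball.2 h, hw⟩
        rw [hR_def] at this
        rw [hball] at this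
        exact this
    obtain ⟨ξ, hξ1, hu, hAE⟩ := key
    obtain ⟨z, t, hz1, hz2, hz3⟩ :=
      main_ball A x b ζ ξ d (ρ x) R hdpos hcase hR2ρ hxb hζ1 hξ1 hu hAx hAE
    have hzA : z ∉ A := by
      intro hzA
      have := hz3 z hzA
      simp only [dist_self] at this
      linarith
    refine ⟨z, hzA, by rwa [mem_closedBall], fun w hw => ?_⟩
    intro hwA
    have h1 := hz3 w hwA
    have h2 : dist w z ≤ ρ x := by rwa [mem_closedBall] at hw
    linarith
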